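/- Let y = Φx + v with x K-sparse with support T. Then ρ := max_{j∈T} |φ_j' y| satisfies ρ ≥ (1/√K)[(1 − δ_K)‖x_T‖₂ − √(1+δ_K)‖v‖₂]. -/

import Mathlib

open Matrix Finset

noncomputable def l2 {n : Type*} [Fintype n] (x : n → ℝ) : ℝ :=
  Real.sqrt (∑ i, (x i) ^ 2)

def Sparse {N : ℕ} (K : ℕ) (x : Fin N → ℝ) : Prop :=
  (Finset.univ.filter (fun i => x i ≠ 0)).card ≤ K

def RIP {M N : ℕ} (Φ : Matrix (Fin M) (Fin N) ℝ) (K : ℕ) (δ : ℝ) : Prop :=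
  ∀ x : Fin N → ℝ, Sparse K x →
    (1 - δ) * (l2 x) ^ 2 ≤ (l2 (Φ.mulVec x)) ^ 2 ∧
    (l2 (Φ.mulVec x)) ^ 2 ≤ (1 + δ) * (l2 x) ^ 2

def colSub {M N : ℕ} (Φ : Matrix (Fin M) (Fin N) ℝ) (S : Finset (Fin N)) :
    Matrix (Fin M) {i // i ∈ S} ℝ := fun r c => Φ r c.1

noncomputable def resid {M N : ℕ} (Φ : Matrix (Fin M) (Fin N) ℝ) (S : Finset (Fin N))
    (y : Fin M → ℝ) : Fin M → ℝ :=
  y - (colSub Φ S).mulVec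
    ((((colSub Φ S)ᵀ * colSub Φ S)⁻¹).mulVec ((colSub Φ S)ᵀ.mulVec y))

def restr {N : ℕ} (x : Fin N → ℝ) (S : Finset (Fin N)) : {i // i ∈ S} → ℝ :=
  fun i => x i.1

section aux
variable {n : Type*} [Fintype n]

lemma l2_eq_norm (f : n → ℝ) : l2 f = ‖(WithLp.equiv 2 (n → ℝ)).symm f‖ := by
  rw [EuclideanSpace.norm_eq, l2]
  congr 1
  exact Finset.sum_congr rfl (fun i _ => by simp [sq_abs])

lemma l2_nonneg (f : n → ℝ) : 0 ≤ l2 f := Real.sqrt_nonneg _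

lemma l2_sq (f : n → ℝ) : (l2 f)^2 = ∑ i, (f i)^2 := by
  rw [l2, Real.sq_sqrt]; positivity

lemma l2_add_le (f g : n → ℝ) : l2 (f + g) ≤ l2 f + l2 g := by
  rw [l2_eq_norm, l2_eq_norm, l2_eq_norm]
  exact norm_add_le _ _

lemma l2_neg (f : n → ℝ) : l2 (-f) = l2 f := by
  simp [l2]

lemma dot_le_l2_mul (f g : n → ℝ) : f ⬝ᵥ g ≤ l2 f * l2 g := by
  rw [l2_eq_norm, l2_eq_norm]
  refine le_trans (le_of_eq ?_)
    (real_inner_le_norm ((WithLp.equiv 2 (n → ℝ)).symm f) ((WithLp.equiv 2 (n → ℝ)).symm g))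
  simp [dotProduct, PiLp.inner_apply, RCLike.inner_apply]
  exact Finset.sum_congr rfl (fun i _ => mul_comm _ _)

lemma dot_self_eq (f : n → ℝ) : f ⬝ᵥ f = (l2 f)^2 := by
  rw [l2_sq]
  simp [dotProduct, sq]

end aux

def extT {N : ℕ} (T : Finset (Fin N)) (z : {i // i ∈ T} → ℝ) : Fin N → ℝ :=
  fun i => if h : i ∈ T then z ⟨i, h⟩ else 0

lemma sparse_extT {N K : ℕ} (T : Finset (Fin N)) (hT : T.card = K)
    (z : {i // i ∈ T} → ℝ) : Sparse K (extT T z) := by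
  unfold Sparse
  refine le_trans (Finset.card_le_card ?_) hT.le
  intro i hi
  rw [Finset.mem_filter] at hi
  by_contra h
  exact hi.2 (by simp [extT, h])

lemma l2_extT {N : ℕ} (T : Finset (Fin N)) (z : {i // i ∈ T} → ℝ) :
    l2 (extT T z) = l2 z := by
  unfold l2
  congr 1
  rw [← Finset.sum_subset (Finset.subset_univ T) (fun i _ hi => by simp [extT, hi])]
  rw [← Finset.sum_coe_sort T (fun i => (extT T z i) ^ 2)]
  exact Finset.sum_congr rfl (fun i _ => by simp [extT, i.2])

lemma mulVec_extT {M N : ℕ} (Φ : Matrix (Fin M) (Fin N) ℝ) (T : Finset (Fin N))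
    (z : {i // i ∈ T} → ℝ) :
    Φ.mulVec (extT T z) = (colSub Φ T).mulVec z := by
  funext r
  show ∑ j, Φ r j * extT T z j = ∑ c, colSub Φ T r c * z c
  rw [← Finset.sum_subset (Finset.subset_univ T) (fun i _ hi => by simp [extT, hi])]
  rw [← Finset.sum_coe_sort T (fun j => Φ r j * extT T z j)]
  exact Finset.sum_congr rfl (fun i _ => by simp [extT, colSub, i.2])

theorem rho_lower_bound {M N K : ℕ} (Φ : Matrix (Fin M) (Fin N) ℝ)
    (x : Fin N → ℝ) (T : Finset (Fin N)) (v y : Fin M → ℝ)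
    (hy : y = Φ.mulVec x + v) (hK : 1 ≤ K) (hT : T.card = K)
    (hsupp : ∀ i, i ∉ T → x i = 0)
    (δK : ℝ) (hδK0 : 0 ≤ δK) (hδK1 : δK < 1) (hRIPK : RIP Φ K δK) :
    ∃ j ∈ T,
      (1 / Real.sqrt K) *
          ((1 - δK) * l2 (restr x T) - Real.sqrt (1 + δK) * l2 v) ≤
        |(fun i => Φ i j) ⬝ᵥ y| := by
  subst hy
  set A := colSub Φ T with hA
  set xT := restr x T with hxT
  have hxext : x = extT T xT := by
    funext i
    by_cases h : i ∈ T
    · simp [extT, h, hxT, restr]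
    · simp [extT, h, hsupp i h]
  have hx : Φ.mulVec x = A.mulVec xT := by
    rw [hxext, mulVec_extT]
  have hRIPsub : ∀ z : {i // i ∈ T} → ℝ,
      (1 - δK) * (l2 z) ^ 2 ≤ (l2 (A.mulVec z)) ^ 2 ∧
      (l2 (A.mulVec z)) ^ 2 ≤ (1 + δK) * (l2 z) ^ 2 := by
    intro z
    have := hRIPK (extT T z) (sparse_extT T hT z)
    rwa [l2_extT, mulVec_extT] at this
  set a := Aᵀ.mulVec (A.mulVec xT) with ha_def
  set b := Aᵀ.mulVec v with hb_def
  set u := Aᵀ.mulVec (A.mulVec xT + v) with hu_def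
  have huab : u = a + b := by
    rw [hu_def, ha_def, hb_def, Matrix.mulVec_add]
  -- lower bound for l2 a
  have hadot : a ⬝ᵥ xT = (l2 (A.mulVec xT))^2 := by
    rw [← dot_self_eq]
    rw [dotProduct_comm, ha_def, Matrix.dotProduct_mulVec, Matrix.vecMul_transpose]
  have ha : (1 - δK) * l2 xT ≤ l2 a := by
    rcases eq_or_lt_of_le (l2_nonneg xT) with h0 | hpos
    · rw [← h0, mul_zero]; exact l2_nonneg a
    · have h1 : (1 - δK) * (l2 xT) ^ 2 ≤ (l2 (A.mulVec xT)) ^ 2 := (hRIPsub xT).1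
      have h2 : a ⬝ᵥ xT ≤ l2 a * l2 xT := dot_le_l2_mul a xT
      have h3 : ((1 - δK) * l2 xT) * l2 xT ≤ l2 a * l2 xT := by
        nlinarith [hadot]
      exact le_of_mul_le_mul_right h3 hpos
  -- upper bound for l2 b
  have hb : l2 b ≤ Real.sqrt (1 + δK) * l2 v := by
    have hAb : l2 (A.mulVec b) ≤ Real.sqrt (1 + δK) * l2 b := by
      have h1 := (hRIPsub b).2
      have : l2 (A.mulVec b) ≤ Real.sqrt ((1 + δK) * (l2 b)^2) := by
        rw [← Real.sqrt_sq (l2_nonneg (A.mulVec b))]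
        exact Real.sqrt_le_sqrt h1
      rwa [Real.sqrt_mul (by linarith), Real.sqrt_sq (l2_nonneg b)] at this
    rcases eq_or_lt_of_le (l2_nonneg b) with h0 | hpos
    · rw [← h0]; exact mul_nonneg (Real.sqrt_nonneg _) (l2_nonneg v)
    · have h2 : b ⬝ᵥ b = (A.mulVec b) ⬝ᵥ v := by
        conv_lhs => rw [hb_def]
        rw [dotProduct_comm, Matrix.dotProduct_mulVec, Matrix.vecMul_transpose,
          dotProduct_comm]
      have h3 : (A.mulVec b) ⬝ᵥ v ≤ l2 (A.mulVec b) * l2 v := dot_le_l2_mul _ _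
      have h4 : (l2 b) * (l2 b) ≤ (Real.sqrt (1 + δK) * l2 v) * l2 b := by
        have := dot_self_eq b
        nlinarith [l2_nonneg v, l2_nonneg (A.mulVec b)]
      exact le_of_mul_le_mul_right h4 hpos
  -- lower bound for l2 u
  have hu : (1 - δK) * l2 xT - Real.sqrt (1 + δK) * l2 v ≤ l2 u := by
    have : a = u + (-b) := by rw [huab]; ring
    have h5 : l2 a ≤ l2 u + l2 b := by
      rw [this]
      calc l2 (u + -b) ≤ l2 u + l2 (-b) := l2_add_le u (-b)
        _ = l2 u + l2 b := by rw [l2_neg]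
    linarith
  -- pick maximizing coordinate
  have hTne : T.Nonempty := Finset.card_pos.mp (by omega)
  have : Nonempty {i // i ∈ T} := ⟨⟨hTne.choose, hTne.choose_spec⟩⟩
  obtain ⟨c, -, hc⟩ := Finset.exists_max_image (Finset.univ : Finset {i // i ∈ T})
    (fun c => |u c|) Finset.univ_nonempty
  have hcard : Fintype.card {i // i ∈ T} = K := by rw [Fintype.card_coe, hT]
  have hsum : (l2 u)^2 ≤ (K : ℝ) * |u c|^2 := by
    rw [l2_sq]
    calc ∑ i, (u i)^2 ≤ ∑ _i : {i // i ∈ T}, |u c|^2 := by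
          refine Finset.sum_le_sum (fun i _ => ?_)
          rw [← sq_abs (u i)]
          exact pow_le_pow_left₀ (abs_nonneg _) (hc i (Finset.mem_univ i)) 2
      _ = (K : ℝ) * |u c|^2 := by
          rw [Finset.sum_const, Finset.card_univ, hcard, nsmul_eq_mul]
  have hKpos : (0:ℝ) < Real.sqrt K := Real.sqrt_pos.mpr (by exact_mod_cast hK)
  have hul : l2 u ≤ Real.sqrt K * |u c| := by
    have : (l2 u)^2 ≤ (Real.sqrt K * |u c|)^2 := by
      rw [mul_pow, Real.sq_sqrt (by positivity : (0:ℝ) ≤ (K:ℝ))]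
      exact hsum
    calc l2 u = Real.sqrt ((l2 u)^2) := (Real.sqrt_sq (l2_nonneg u)).symm
      _ ≤ Real.sqrt ((Real.sqrt K * |u c|)^2) := Real.sqrt_le_sqrt this
      _ = Real.sqrt K * |u c| := Real.sqrt_sq (by positivity)
  refine ⟨c.1, c.2, ?_⟩
  have huc : u c = (fun i => Φ i c.1) ⬝ᵥ (Φ.mulVec x + v) := by
    rw [hu_def, ← hx]
    simp [Matrix.mulVec, dotProduct, Matrix.transpose_apply, hA, colSub]
  rw [← huc]
  rw [div_mul_eq_mul_div, one_mul, div_le_iff₀ hKpos]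
  calc (1 - δK) * l2 xT - Real.sqrt (1 + δK) * l2 v ≤ l2 u := hu
    _ ≤ Real.sqrt K * |u c| := hul
    _ = |u c| * Real.sqrt K := mul_comm _ _
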